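/- arXiv:quant-ph/0611002 — 2 statements merged into one kernel-verified Lean document; each statement's English description precedes it below -/
import Mathlib

section
/- A set D = {U_1,...,U_K} of unitary d×d matrices satisfies (1/K²)·Σ_{k,k'} |tr(U_k† U_{k'})|⁴ ≥ 2, i.e. the unitary frame potential is bounded below by 2. -/
open MeasureTheory Matrix
open scoped Kronecker ComplexConjugate

noncomputable section

variable {ι : Type} [Fintype ι] [DecidableEq ι]

abbrev UG (ι : Type) [Fintype ι] [DecidableEq ι] := Matrix.unitaryGroup ι ℂ

instance : IsTopologicalGroup (UG ι) where
  continuous_mul := by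
    apply Continuous.subtype_mk
    exact (continuous_subtype_val.comp continuous_fst).matrix_mul
      (continuous_subtype_val.comp continuous_snd)
  continuous_inv := by
    apply Continuous.subtype_mk
    exact continuous_subtype_val.matrix_conjTranspose

theorem isCompact_UG : IsCompact (Matrix.unitaryGroup ι ℂ : Set (Matrix ι ι ℂ)) := by
  have hK : IsCompact (Set.univ.pi fun _ : ι => Set.univ.pi fun _ : ι =>
      Metric.closedBall (0:ℂ) 1) :=
    isCompact_univ_pi fun _ => isCompact_univ_pi fun _ => isCompact_closedBall _ _
  have hof : Continuous (Matrix.of : (ι → ι → ℂ) → Matrix ι ι ℂ) := continuous_id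
  have hK' := hK.image hof
  have hcl : IsClosed (Matrix.unitaryGroup ι ℂ : Set (Matrix ι ι ℂ)) := by
    have he : (Matrix.unitaryGroup ι ℂ : Set (Matrix ι ι ℂ)) =
        (fun A : Matrix ι ι ℂ => A * star A) ⁻¹' {1} := by
      ext A
      simp [Matrix.mem_unitaryGroup_iff]
    rw [he]
    exact IsClosed.preimage (continuous_id.matrix_mul continuous_id.matrix_conjTranspose)
      isClosed_singleton
  apply hK'.of_isClosed_subset hcl
  intro A hA
  have h1 : star A * A = 1 := (Matrix.mem_unitaryGroup_iff').1 hA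
  refine ⟨fun i j => A i j, ?_, rfl⟩
  intro i _
  intro j _
  have h2 : ∑ k, Complex.normSq (A k j) = 1 := by
    have h0 := congrFun (congrFun h1 j) j
    simp only [Matrix.mul_apply, Matrix.one_apply_eq, Matrix.star_apply] at h0
    have h3 : ∀ k : ι, star (A k j) * A k j = (Complex.normSq (A k j) : ℂ) := by
      intro k
      rw [Complex.star_def, Complex.normSq_eq_conj_mul_self]
    simp only [h3] at h0
    exact_mod_cast (by exact_mod_cast h0 : ((∑ k, Complex.normSq (A k j) : ℝ) : ℂ) = 1)
  simp only [Metric.mem_closedBall, dist_zero_right]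
  have h4 : Complex.normSq (A i j) ≤ 1 := by
    rw [← h2]
    exact Finset.single_le_sum (f := fun k => Complex.normSq (A k j))
      (fun k _ => Complex.normSq_nonneg _) (Finset.mem_univ i)
  rw [Complex.normSq_eq_norm_sq] at h4
  nlinarith [norm_nonneg (A i j)]

instance : CompactSpace (UG ι) := isCompact_iff_compactSpace.mp isCompact_UG

instance : MeasurableSpace (UG ι) := borel _
instance : BorelSpace (UG ι) := ⟨rfl⟩

/-- The normalized Haar (probability) measure on the unitary group. -/
def haarUG (ι : Type) [Fintype ι] [DecidableEq ι] : Measure (UG ι) :=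
  Measure.haarMeasure
    (⟨⟨Set.univ, isCompact_univ⟩, by rw [interior_univ]; exact Set.univ_nonempty⟩ :
      TopologicalSpace.PositiveCompacts (UG ι))

/-- Haar average of (U⊗U) ρ (U⊗U)†, defined entrywise. -/
def haarTwirl (ι : Type) [Fintype ι] [DecidableEq ι]
    (ρ : Matrix (ι × ι) (ι × ι) ℂ) : Matrix (ι × ι) (ι × ι) ℂ :=
  Matrix.of fun i j =>
    ∫ u : UG ι,
      ((((u : Matrix ι ι ℂ) ⊗ₖ (u : Matrix ι ι ℂ)) * ρ *
        ((u : Matrix ι ι ℂ) ⊗ₖ (u : Matrix ι ι ℂ))ᴴ) i j) ∂(haarUG ι)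

/-- A finite family of matrices is a unitary 2-design. -/
def IsUnitaryTwoDesign {κ : Type} [Fintype κ] (Us : κ → Matrix ι ι ℂ) : Prop :=
  (∀ k, Us k ∈ Matrix.unitaryGroup ι ℂ) ∧
  ∀ ρ : Matrix (ι × ι) (ι × ι) ℂ,
    ((Fintype.card κ : ℂ))⁻¹ • (∑ k, (Us k ⊗ₖ Us k) * ρ * (Us k ⊗ₖ Us k)ᴴ) = haarTwirl ι ρ

/-- The frame potential. -/
def framePotential {κ : Type} [Fintype κ] (Us : κ → Matrix ι ι ℂ) : ℝ :=
  ((Fintype.card κ : ℝ) ^ 2)⁻¹ *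
    ∑ k : κ, ∑ k' : κ, ‖Matrix.trace ((Us k)ᴴ * Us k')‖ ^ 4



section FPAux
open Finset
open scoped ComplexConjugate

private lemma fp_prod_sum2 {α β : Type*} [Fintype α] [Fintype β] (f : α → ℂ) (g : β → ℂ) :
    ∑ m : α × β, f m.1 * g m.2 = (∑ a, f a) * (∑ b, g b) := by
  rw [Fintype.sum_mul_sum, Fintype.sum_prod_type]

private lemma fp_prod_sum4 {α : Type*} [Fintype α] (h₁ h₂ h₃ h₄ : α → ℂ) :
    ∑ m : α × α × α × α, h₁ m.1 * h₂ m.2.1 * h₃ m.2.2.1 * h₄ m.2.2.2 =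
      (∑ a, h₁ a) * (∑ a, h₂ a) * (∑ a, h₃ a) * (∑ a, h₄ a) := by
  have h2 := fp_prod_sum2 (α := α) (β := α × α × α) h₁ (fun m => h₂ m.1 * (h₃ m.2.1 * h₄ m.2.2))
  have h3 := fp_prod_sum2 (α := α) (β := α × α) h₂ (fun m => h₃ m.1 * h₄ m.2)
  have h4 := fp_prod_sum2 (α := α) (β := α) h₃ h₄
  calc ∑ m : α × α × α × α, h₁ m.1 * h₂ m.2.1 * h₃ m.2.2.1 * h₄ m.2.2.2
      = ∑ m : α × α × α × α, h₁ m.1 * (h₂ m.2.1 * (h₃ m.2.2.1 * h₄ m.2.2.2)) :=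
        Fintype.sum_congr _ _ (by intro m; ring)
    _ = (∑ a, h₁ a) * ∑ m : α × α × α, h₂ m.1 * (h₃ m.2.1 * h₄ m.2.2) := h2
    _ = (∑ a, h₁ a) * ((∑ a, h₂ a) * ∑ m : α × α, h₃ m.1 * h₄ m.2) := by
        rw [show (∑ m : α × α × α, h₂ m.1 * (h₃ m.2.1 * h₄ m.2.2))
          = (∑ a, h₂ a) * ∑ m : α × α, h₃ m.1 * h₄ m.2 from h3]
    _ = (∑ a, h₁ a) * (∑ a, h₂ a) * (∑ a, h₃ a) * (∑ a, h₄ a) := by rw [h4]; ring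

private lemma fp_bessel2 {n : Type*} [Fintype n] (u₁ u₂ w : n → ℂ)
    (h11 : ∑ x, conj (u₁ x) * u₁ x = 1) (h22 : ∑ x, conj (u₂ x) * u₂ x = 1)
    (h12 : ∑ x, conj (u₁ x) * u₂ x = 0) (h21 : ∑ x, conj (u₂ x) * u₁ x = 0) :
    Complex.normSq (∑ x, w x * u₁ x) + Complex.normSq (∑ x, w x * u₂ x) ≤
      ∑ x, Complex.normSq (w x) := by
  classical
  let v : Fin 2 → EuclideanSpace ℂ n := ![WithLp.toLp 2 u₁, WithLp.toLp 2 u₂]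
  have hinner : ∀ (f g : EuclideanSpace ℂ n), (inner ℂ f g : ℂ) = ∑ x, conj (f x) * g x := by
    intro f g
    rw [PiLp.inner_apply]
    exact Finset.sum_congr rfl fun x _ => (RCLike.inner_apply _ _).trans (mul_comm _ _)
  have hv : Orthonormal ℂ v := by
    rw [orthonormal_iff_ite]
    intro i j
    fin_cases i <;> fin_cases j <;>
      simp only [v, Matrix.cons_val_zero, Matrix.cons_val_one, Matrix.head_cons, hinner] <;>
      simp [h11, h22, h12, h21]
  let W : EuclideanSpace ℂ n := WithLp.toLp 2 (fun x => conj (w x))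
  have hb := hv.sum_inner_products_le (s := Finset.univ) W
  have hWnorm : ‖W‖ ^ 2 = ∑ x, Complex.normSq (w x) := by
    rw [EuclideanSpace.norm_eq, Real.sq_sqrt (by positivity)]
    refine Finset.sum_congr rfl fun x _ => ?_
    simp [W, Complex.sq_norm]
  have hIP : ∀ i : Fin 2, ‖(inner ℂ (v i) W : ℂ)‖ ^ 2 = Complex.normSq (∑ x, w x * v i x) := by
    intro i
    have : (inner ℂ (v i) W : ℂ) = conj (∑ x, w x * v i x) := by
      rw [hinner, map_sum]
      exact Finset.sum_congr rfl fun x _ => by rw [_root_.map_mul]; exact mul_comm _ _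
    rw [this, Complex.norm_conj, Complex.sq_norm]
  have h2 : ∑ i : Fin 2, ‖(inner ℂ (v i) W : ℂ)‖ ^ 2
      = Complex.normSq (∑ x, w x * u₁ x) + Complex.normSq (∑ x, w x * u₂ x) := by
    rw [Fin.sum_univ_two, hIP 0, hIP 1]
    simp [v]
  rw [h2, hWnorm] at hb
  exact hb

variable {d K : ℕ}

private noncomputable def fpT (Us : Fin K → Matrix (Fin d) (Fin d) ℂ) (k : Fin K)
    (r x : (Fin d × Fin d) × (Fin d × Fin d)) : ℂ :=
  Us k r.1.1 x.1.1 * Us k r.1.2 x.1.2 * conj (Us k r.2.1 x.2.1) * conj (Us k r.2.2 x.2.2)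

private noncomputable def fpA (Us : Fin K → Matrix (Fin d) (Fin d) ℂ)
    (r x : (Fin d × Fin d) × (Fin d × Fin d)) : ℂ := ∑ k, fpT Us k r x

private noncomputable def fpt (Us : Fin K → Matrix (Fin d) (Fin d) ℂ) (k k' : Fin K) : ℂ :=
  ∑ m : Fin d × Fin d, conj (Us k m.1 m.2) * Us k' m.1 m.2

private def fpv₁ (d : ℕ) : ((Fin d × Fin d) × (Fin d × Fin d)) → ℂ :=
  fun r => if r.1 = r.2 then 1 else 0

private def fpv₂ (d : ℕ) : ((Fin d × Fin d) × (Fin d × Fin d)) → ℂ :=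
  fun r => if r.1.1 = r.2.2 ∧ r.1.2 = r.2.1 then 1 else 0

private lemma fp_unit_row (Us : Fin K → Matrix (Fin d) (Fin d) ℂ)
    (hU : ∀ k, Us k ∈ Matrix.unitaryGroup (Fin d) ℂ) (k : Fin K) (a b : Fin d) :
    ∑ c, Us k a c * conj (Us k b c) = if a = b then 1 else 0 := by
  have h := (Matrix.mem_unitaryGroup_iff).1 (hU k)
  have := congrFun (congrFun h a) b
  simpa [Matrix.mul_apply, Matrix.one_apply, Matrix.conjTranspose_apply] using this

private lemma fp_fix_v₁ (Us : Fin K → Matrix (Fin d) (Fin d) ℂ)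
    (hU : ∀ k, Us k ∈ Matrix.unitaryGroup (Fin d) ℂ)
    (r : (Fin d × Fin d) × (Fin d × Fin d)) :
    ∑ x, fpA Us r x * fpv₁ d x = (K : ℂ) * fpv₁ d r := by
  have h1 : ∑ x, fpA Us r x * fpv₁ d x = ∑ c : Fin d × Fin d, fpA Us r (c, c) := by
    rw [Fintype.sum_prod_type]
    simp [fpv₁, Finset.sum_ite_eq, mul_ite]
  rw [h1]
  have h2 : ∀ k : Fin K, ∑ c : Fin d × Fin d, fpT Us k r (c, c)
      = (if r.1.1 = r.2.1 then 1 else 0) * (if r.1.2 = r.2.2 then 1 else 0) := by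
    intro k
    have := fp_prod_sum2 (fun c₁ => Us k r.1.1 c₁ * conj (Us k r.2.1 c₁))
      (fun c₂ => Us k r.1.2 c₂ * conj (Us k r.2.2 c₂))
    rw [fp_unit_row Us hU, fp_unit_row Us hU] at this
    rw [← this]
    exact Fintype.sum_congr _ _ (by intro c; simp [fpT]; ring)
  simp only [fpA]
  rw [Finset.sum_comm]
  simp only [h2]
  simp [fpv₁, Prod.ext_iff, ite_and, mul_ite, Finset.sum_const]
  split <;> simp [mul_comm]

private lemma fp_fix_v₂ (Us : Fin K → Matrix (Fin d) (Fin d) ℂ)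
    (hU : ∀ k, Us k ∈ Matrix.unitaryGroup (Fin d) ℂ)
    (r : (Fin d × Fin d) × (Fin d × Fin d)) :
    ∑ x, fpA Us r x * fpv₂ d x = (K : ℂ) * fpv₂ d r := by
  have h1 : ∑ x, fpA Us r x * fpv₂ d x = ∑ c : Fin d × Fin d, fpA Us r (c, (c.2, c.1)) := by
    rw [Fintype.sum_prod_type]
    refine Fintype.sum_congr _ _ ?_
    intro c
    have h : ∀ e : Fin d × Fin d, fpv₂ d ((c, e)) = if (c.2, c.1) = e then (1:ℂ) else 0 := by
      intro e
      by_cases h1 : c.1 = e.2 <;> by_cases h2 : c.2 = e.1 <;>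
        simp [fpv₂, h1, h2, Prod.ext_iff]
    simp only [h, mul_ite, mul_one, mul_zero, Finset.sum_ite_eq, Finset.mem_univ, if_true]
  rw [h1]
  have h2 : ∀ k : Fin K, ∑ c : Fin d × Fin d, fpT Us k r (c, (c.2, c.1))
      = (if r.1.1 = r.2.2 then 1 else 0) * (if r.1.2 = r.2.1 then 1 else 0) := by
    intro k
    have := fp_prod_sum2 (fun c₁ => Us k r.1.1 c₁ * conj (Us k r.2.2 c₁))
      (fun c₂ => Us k r.1.2 c₂ * conj (Us k r.2.1 c₂))
    rw [fp_unit_row Us hU, fp_unit_row Us hU] at this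
    rw [← this]
    exact Fintype.sum_congr _ _ (by intro c; simp [fpT]; ring)
  simp only [fpA]
  rw [Finset.sum_comm]
  simp only [h2]
  simp [fpv₂, ite_and, mul_ite, Finset.sum_const]
  split <;> simp [mul_comm]

private def fpEquiv (d : ℕ) :
    ((Fin d × Fin d) × (Fin d × Fin d) × (Fin d × Fin d) × (Fin d × Fin d)) ≃
      (((Fin d × Fin d) × (Fin d × Fin d)) × ((Fin d × Fin d) × (Fin d × Fin d))) where
  toFun m := (((m.1.1, m.2.1.1), (m.2.2.1.1, m.2.2.2.1)), ((m.1.2, m.2.1.2), (m.2.2.1.2, m.2.2.2.2)))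
  invFun p := ((p.1.1.1, p.2.1.1), (p.1.1.2, p.2.1.2), (p.1.2.1, p.2.2.1), (p.1.2.2, p.2.2.2))
  left_inv := by rintro ⟨⟨a, c⟩, ⟨a', c'⟩, ⟨b, e⟩, ⟨b', e'⟩⟩; rfl
  right_inv := by rintro ⟨⟨⟨a, a'⟩, ⟨b, b'⟩⟩, ⟨⟨c, c'⟩, ⟨e, e'⟩⟩⟩; rfl

private lemma fp_inner_sum (Us : Fin K → Matrix (Fin d) (Fin d) ℂ) (k k' : Fin K) :
    ∑ r : (Fin d × Fin d) × (Fin d × Fin d), ∑ x : (Fin d × Fin d) × (Fin d × Fin d),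
      conj (fpT Us k r x) * fpT Us k' r x
    = fpt Us k k' * fpt Us k k' * conj (fpt Us k k') * conj (fpt Us k k') := by
  have hconj : ∀ k k' : Fin K, ∑ m : Fin d × Fin d, Us k m.1 m.2 * conj (Us k' m.1 m.2)
      = conj (fpt Us k k') := by
    intro k k'
    rw [fpt, map_sum]
    exact Fintype.sum_congr _ _ fun m => by simp only [_root_.map_mul, Complex.conj_conj]
  calc ∑ r : (Fin d × Fin d) × (Fin d × Fin d), ∑ x : (Fin d × Fin d) × (Fin d × Fin d),
        conj (fpT Us k r x) * fpT Us k' r x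
      = ∑ p : ((Fin d × Fin d) × (Fin d × Fin d)) × ((Fin d × Fin d) × (Fin d × Fin d)),
          conj (fpT Us k p.1 p.2) * fpT Us k' p.1 p.2 :=
        (Fintype.sum_prod_type' (f := fun r x => conj (fpT Us k r x) * fpT Us k' r x)).symm
    _ = ∑ m : (Fin d × Fin d) × (Fin d × Fin d) × (Fin d × Fin d) × (Fin d × Fin d),
          (conj (Us k m.1.1 m.1.2) * Us k' m.1.1 m.1.2) *
          (conj (Us k m.2.1.1 m.2.1.2) * Us k' m.2.1.1 m.2.1.2) *
          (Us k m.2.2.1.1 m.2.2.1.2 * conj (Us k' m.2.2.1.1 m.2.2.1.2)) *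
          (Us k m.2.2.2.1 m.2.2.2.2 * conj (Us k' m.2.2.2.1 m.2.2.2.2)) := by
        rw [← Equiv.sum_comp (fpEquiv d)]
        refine Fintype.sum_congr _ _ fun m => ?_
        obtain ⟨⟨a, c⟩, ⟨a', c'⟩, ⟨b, e⟩, ⟨b', e'⟩⟩ := m
        simp only [fpEquiv, fpT, Equiv.coe_fn_mk, _root_.map_mul, Complex.conj_conj]
        ring
    _ = fpt Us k k' * fpt Us k k' * conj (fpt Us k k') * conj (fpt Us k k') := by
        have h4 := fp_prod_sum4 (fun m : Fin d × Fin d => conj (Us k m.1 m.2) * Us k' m.1 m.2)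
          (fun m : Fin d × Fin d => conj (Us k m.1 m.2) * Us k' m.1 m.2)
          (fun m : Fin d × Fin d => Us k m.1 m.2 * conj (Us k' m.1 m.2))
          (fun m : Fin d × Fin d => Us k m.1 m.2 * conj (Us k' m.1 m.2))
        rw [hconj k k'] at h4
        exact h4

private lemma fp_sum_conj (Us : Fin K → Matrix (Fin d) (Fin d) ℂ) :
    ∑ r, ∑ x, conj (fpA Us r x) * fpA Us r x
    = ∑ k, ∑ k', fpt Us k k' * fpt Us k k' * conj (fpt Us k k') * conj (fpt Us k k') := by
  have step1 : ∀ r x, conj (fpA Us r x) * fpA Us r x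
      = ∑ k, ∑ k', conj (fpT Us k r x) * fpT Us k' r x := by
    intro r x
    rw [fpA, map_sum, Fintype.sum_mul_sum]
  calc ∑ r, ∑ x, conj (fpA Us r x) * fpA Us r x
      = ∑ r, ∑ x, ∑ k, ∑ k', conj (fpT Us k r x) * fpT Us k' r x :=
        Finset.sum_congr rfl fun r _ => Finset.sum_congr rfl fun x _ => step1 r x
    _ = ∑ r, ∑ k, ∑ x, ∑ k', conj (fpT Us k r x) * fpT Us k' r x :=
        Finset.sum_congr rfl fun r _ => Finset.sum_comm
    _ = ∑ k, ∑ r, ∑ x, ∑ k', conj (fpT Us k r x) * fpT Us k' r x := Finset.sum_comm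
    _ = ∑ k, ∑ r, ∑ k', ∑ x, conj (fpT Us k r x) * fpT Us k' r x :=
        Finset.sum_congr rfl fun k _ => Finset.sum_congr rfl fun r _ => Finset.sum_comm
    _ = ∑ k, ∑ k', ∑ r, ∑ x, conj (fpT Us k r x) * fpT Us k' r x :=
        Finset.sum_congr rfl fun k _ => Finset.sum_comm
    _ = ∑ k, ∑ k', fpt Us k k' * fpt Us k k' * conj (fpt Us k k') * conj (fpt Us k k') :=
        Finset.sum_congr rfl fun k _ => Finset.sum_congr rfl fun k' _ => fp_inner_sum Us k k'

private lemma fp_trace (Us : Fin K → Matrix (Fin d) (Fin d) ℂ) (k k' : Fin K) :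
    Matrix.trace ((Us k)ᴴ * Us k') = fpt Us k k' := by
  rw [fpt, Fintype.sum_prod_type]
  rw [Matrix.trace]
  simp only [Matrix.diag_apply, Matrix.mul_apply, Matrix.conjTranspose_apply]
  rw [Finset.sum_comm]; rfl

private lemma fp_main (Us : Fin K → Matrix (Fin d) (Fin d) ℂ) :
    ∑ r, ∑ x, Complex.normSq (fpA Us r x)
    = ∑ k, ∑ k', ‖Matrix.trace ((Us k)ᴴ * Us k')‖ ^ 4 := by
  apply Complex.ofReal_injective
  push_cast
  calc ∑ r : (Fin d × Fin d) × (Fin d × Fin d), ∑ x : (Fin d × Fin d) × (Fin d × Fin d),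
        ((Complex.normSq (fpA Us r x) : ℝ) : ℂ)
      = ∑ r, ∑ x, conj (fpA Us r x) * fpA Us r x :=
        Finset.sum_congr rfl fun r _ => Finset.sum_congr rfl fun x _ =>
          (Complex.normSq_eq_conj_mul_self).symm ▸ rfl
    _ = ∑ k, ∑ k', fpt Us k k' * fpt Us k k' * conj (fpt Us k k') * conj (fpt Us k k') :=
        fp_sum_conj Us
    _ = ∑ k : Fin K, ∑ k' : Fin K, (‖((Us k)ᴴ * Us k').trace‖ : ℂ) ^ 4 := by
        refine Finset.sum_congr rfl fun k _ => Finset.sum_congr rfl fun k' _ => ?_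
        rw [fp_trace]
        have h1 : fpt Us k k' * conj (fpt Us k k') = ((‖fpt Us k k'‖ ^ 2 : ℝ) : ℂ) := by
          rw [Complex.mul_conj, Complex.sq_norm]
        calc fpt Us k k' * fpt Us k k' * conj (fpt Us k k') * conj (fpt Us k k')
            = (fpt Us k k' * conj (fpt Us k k')) * (fpt Us k k' * conj (fpt Us k k')) := by ring
          _ = ((‖fpt Us k k'‖ : ℂ)) ^ 4 := by rw [h1]; push_cast; ring

end FPAux

/-- the unitary frame potential of any finite set of unitary
`d × d` matrices is bounded below by `2`. -/
theorem framePotential_ge_two (d K : ℕ) (hd : 2 ≤ d) (hK : 0 < K)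
    (Us : Fin K → Matrix (Fin d) (Fin d) ℂ)
    (hU : ∀ k, Us k ∈ Matrix.unitaryGroup (Fin d) ℂ) :
    2 ≤ framePotential Us := by
  classical
  have hdR : (2:ℝ) ≤ (d:ℝ) := by exact_mod_cast hd
  have hdne : (d:ℂ) ≠ 0 := Nat.cast_ne_zero.2 (by omega)
  set s : ℝ := Real.sqrt ((d:ℝ)^2 - 1) with hs
  have hs2 : s^2 = (d:ℝ)^2 - 1 := Real.sq_sqrt (by nlinarith)
  have hspos : 0 < s := Real.sqrt_pos.2 (by nlinarith)
  have hsne : ((s:ℂ)) ≠ 0 := Complex.ofReal_ne_zero.2 hspos.ne'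
  have hs2c : ((s:ℂ))^2 = (d:ℂ)^2 - 1 := by
    have := congrArg (fun x : ℝ => (x : ℂ)) hs2
    push_cast at this
    exact this
  have hd2ne : (d:ℂ)^2 - 1 ≠ 0 := by
    rw [← hs2c]
    exact pow_ne_zero 2 hsne
  -- the four basic sums
  have hv11 : ∑ r, conj (fpv₁ d r) * fpv₁ d r = (d:ℂ)^2 := by
    rw [Fintype.sum_prod_type]
    simp [fpv₁, apply_ite, Finset.sum_ite_eq, mul_ite]
    ring
  have hv22 : ∑ r, conj (fpv₂ d r) * fpv₂ d r = (d:ℂ)^2 := by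
    rw [Fintype.sum_prod_type]
    simp [fpv₂, apply_ite, Finset.sum_ite_eq, mul_ite, Fintype.sum_prod_type, ite_and]
    ring
  have hv12 : ∑ r, conj (fpv₁ d r) * fpv₂ d r = (d:ℂ) := by
    rw [Fintype.sum_prod_type]
    simp [fpv₁, fpv₂, apply_ite, Finset.sum_ite_eq, mul_ite, Fintype.sum_prod_type, ite_and,
      Prod.ext_iff]
  have hv21 : ∑ r, conj (fpv₂ d r) * fpv₁ d r = (d:ℂ) := by
    rw [Fintype.sum_prod_type]
    simp [fpv₁, fpv₂, apply_ite, Finset.sum_ite_eq, mul_ite, Fintype.sum_prod_type, ite_and,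
      Prod.ext_iff]
  set u₁ : ((Fin d × Fin d) × (Fin d × Fin d)) → ℂ :=
    fun r => (d:ℂ)⁻¹ * fpv₁ d r with hu₁
  set u₂ : ((Fin d × Fin d) × (Fin d × Fin d)) → ℂ :=
    fun r => ((s:ℂ))⁻¹ * (fpv₂ d r - (d:ℂ)⁻¹ * fpv₁ d r) with hu₂
  have expand : ∀ (c₁ c₂ c₃ c₄ : ℂ),
      ∑ r, (c₁ * (conj (fpv₁ d r) * fpv₁ d r) + c₂ * (conj (fpv₁ d r) * fpv₂ d r)
        + c₃ * (conj (fpv₂ d r) * fpv₁ d r) + c₄ * (conj (fpv₂ d r) * fpv₂ d r))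
      = c₁ * (d:ℂ)^2 + c₂ * (d:ℂ) + c₃ * (d:ℂ) + c₄ * (d:ℂ)^2 := by
    intro c₁ c₂ c₃ c₄
    rw [Finset.sum_add_distrib, Finset.sum_add_distrib, Finset.sum_add_distrib,
      ← Finset.mul_sum, ← Finset.mul_sum, ← Finset.mul_sum, ← Finset.mul_sum,
      hv11, hv12, hv21, hv22]
  have h11 : ∑ r, conj (u₁ r) * u₁ r = 1 := by
    calc ∑ r, conj (u₁ r) * u₁ r
        = ∑ r, (((d:ℂ)⁻¹ * (d:ℂ)⁻¹) * (conj (fpv₁ d r) * fpv₁ d r)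
            + 0 * (conj (fpv₁ d r) * fpv₂ d r) + 0 * (conj (fpv₂ d r) * fpv₁ d r)
            + 0 * (conj (fpv₂ d r) * fpv₂ d r)) :=
          Finset.sum_congr rfl fun r _ => by
            simp only [hu₁, _root_.map_mul, map_inv₀, map_natCast]
            ring
      _ = ((d:ℂ)⁻¹ * (d:ℂ)⁻¹) * (d:ℂ)^2 + 0 * (d:ℂ) + 0 * (d:ℂ) + 0 * (d:ℂ)^2 :=
          expand _ _ _ _
      _ = 1 := by field_simp; try ring
  have h22 : ∑ r, conj (u₂ r) * u₂ r = 1 := by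
    calc ∑ r, conj (u₂ r) * u₂ r
        = ∑ r, ((((s:ℂ))⁻¹ * ((s:ℂ))⁻¹ * (d:ℂ)⁻¹ * (d:ℂ)⁻¹) * (conj (fpv₁ d r) * fpv₁ d r)
            + (-(((s:ℂ))⁻¹ * ((s:ℂ))⁻¹ * (d:ℂ)⁻¹)) * (conj (fpv₁ d r) * fpv₂ d r)
            + (-(((s:ℂ))⁻¹ * ((s:ℂ))⁻¹ * (d:ℂ)⁻¹)) * (conj (fpv₂ d r) * fpv₁ d r)
            + (((s:ℂ))⁻¹ * ((s:ℂ))⁻¹) * (conj (fpv₂ d r) * fpv₂ d r)) :=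
          Finset.sum_congr rfl fun r _ => by
            simp only [hu₂, _root_.map_mul, map_sub, map_inv₀, map_natCast, Complex.conj_ofReal]
            ring
      _ = (((s:ℂ))⁻¹ * ((s:ℂ))⁻¹ * (d:ℂ)⁻¹ * (d:ℂ)⁻¹) * (d:ℂ)^2
            + (-(((s:ℂ))⁻¹ * ((s:ℂ))⁻¹ * (d:ℂ)⁻¹)) * (d:ℂ)
            + (-(((s:ℂ))⁻¹ * ((s:ℂ))⁻¹ * (d:ℂ)⁻¹)) * (d:ℂ)
            + (((s:ℂ))⁻¹ * ((s:ℂ))⁻¹) * (d:ℂ)^2 := expand _ _ _ _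
      _ = ((s:ℂ))⁻¹ * ((s:ℂ))⁻¹ * ((d:ℂ)^2 - 1) := by field_simp; try ring
      _ = 1 := by
          rw [← hs2c]
          field_simp
          try ring
  have h12 : ∑ r, conj (u₁ r) * u₂ r = 0 := by
    calc ∑ r, conj (u₁ r) * u₂ r
        = ∑ r, ((-((d:ℂ)⁻¹ * ((s:ℂ))⁻¹ * (d:ℂ)⁻¹)) * (conj (fpv₁ d r) * fpv₁ d r)
            + ((d:ℂ)⁻¹ * ((s:ℂ))⁻¹) * (conj (fpv₁ d r) * fpv₂ d r)
            + 0 * (conj (fpv₂ d r) * fpv₁ d r) + 0 * (conj (fpv₂ d r) * fpv₂ d r)) :=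
          Finset.sum_congr rfl fun r _ => by
            simp only [hu₁, hu₂, _root_.map_mul, map_sub, map_inv₀, map_natCast,
              Complex.conj_ofReal]
            ring
      _ = (-((d:ℂ)⁻¹ * ((s:ℂ))⁻¹ * (d:ℂ)⁻¹)) * (d:ℂ)^2 + ((d:ℂ)⁻¹ * ((s:ℂ))⁻¹) * (d:ℂ)
            + 0 * (d:ℂ) + 0 * (d:ℂ)^2 := expand _ _ _ _
      _ = 0 := by field_simp; try ring
  have h21 : ∑ r, conj (u₂ r) * u₁ r = 0 := by
    calc ∑ r, conj (u₂ r) * u₁ r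
        = ∑ r, ((-((d:ℂ)⁻¹ * ((s:ℂ))⁻¹ * (d:ℂ)⁻¹)) * (conj (fpv₁ d r) * fpv₁ d r)
            + 0 * (conj (fpv₁ d r) * fpv₂ d r)
            + ((d:ℂ)⁻¹ * ((s:ℂ))⁻¹) * (conj (fpv₂ d r) * fpv₁ d r)
            + 0 * (conj (fpv₂ d r) * fpv₂ d r)) :=
          Finset.sum_congr rfl fun r _ => by
            simp only [hu₁, hu₂, _root_.map_mul, map_sub, map_inv₀, map_natCast,
              Complex.conj_ofReal]
            ring
      _ = (-((d:ℂ)⁻¹ * ((s:ℂ))⁻¹ * (d:ℂ)⁻¹)) * (d:ℂ)^2 + 0 * (d:ℂ)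
            + ((d:ℂ)⁻¹ * ((s:ℂ))⁻¹) * (d:ℂ) + 0 * (d:ℂ)^2 := expand _ _ _ _
      _ = 0 := by field_simp; try ring
  -- the action of A on u₁, u₂
  have e1 : ∀ r, ∑ x, fpA Us r x * u₁ x = (K:ℂ) * u₁ r := by
    intro r
    calc ∑ x, fpA Us r x * u₁ x = (d:ℂ)⁻¹ * ∑ x, fpA Us r x * fpv₁ d x := by
          rw [Finset.mul_sum]
          exact Finset.sum_congr rfl fun x _ => by rw [hu₁]; ring
      _ = (d:ℂ)⁻¹ * ((K:ℂ) * fpv₁ d r) := by rw [fp_fix_v₁ Us hU r]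
      _ = (K:ℂ) * u₁ r := by rw [hu₁]; ring
  have e2 : ∀ r, ∑ x, fpA Us r x * u₂ x = (K:ℂ) * u₂ r := by
    intro r
    have step : ∀ x, fpA Us r x * u₂ x
        = ((s:ℂ))⁻¹ * (fpA Us r x * fpv₂ d x) - ((s:ℂ))⁻¹ * (d:ℂ)⁻¹ * (fpA Us r x * fpv₁ d x) := by
      intro x
      rw [hu₂]
      ring
    calc ∑ x, fpA Us r x * u₂ x
        = ((s:ℂ))⁻¹ * (∑ x, fpA Us r x * fpv₂ d x)
            - ((s:ℂ))⁻¹ * (d:ℂ)⁻¹ * (∑ x, fpA Us r x * fpv₁ d x) := by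
          rw [Finset.sum_congr rfl fun x _ => step x, Finset.sum_sub_distrib,
            ← Finset.mul_sum, ← Finset.mul_sum]
      _ = ((s:ℂ))⁻¹ * ((K:ℂ) * fpv₂ d r) - ((s:ℂ))⁻¹ * (d:ℂ)⁻¹ * ((K:ℂ) * fpv₁ d r) := by
          rw [fp_fix_v₁ Us hU r, fp_fix_v₂ Us hU r]
      _ = (K:ℂ) * u₂ r := by rw [hu₂]; ring
  -- Bessel, pointwise in r
  have hb : ∀ r, (K:ℝ)^2 * Complex.normSq (u₁ r) + (K:ℝ)^2 * Complex.normSq (u₂ r)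
      ≤ ∑ x, Complex.normSq (fpA Us r x) := by
    intro r
    have hbessel := fp_bessel2 u₁ u₂ (fpA Us r) h11 h22 h12 h21
    rw [e1 r, e2 r] at hbessel
    have hK2 : Complex.normSq ((K:ℂ)) = (K:ℝ)^2 := by
      rw [Complex.normSq_natCast]
      push_cast
      ring
    rwa [show Complex.normSq ((K:ℂ) * u₁ r) = (K:ℝ)^2 * Complex.normSq (u₁ r) from by
        rw [Complex.normSq_mul, hK2],
      show Complex.normSq ((K:ℂ) * u₂ r) = (K:ℝ)^2 * Complex.normSq (u₂ r) from by
        rw [Complex.normSq_mul, hK2]] at hbessel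
  -- sums of normSq of u₁, u₂
  have hsum1 : ∑ r, Complex.normSq (u₁ r) = 1 := by
    have : ((∑ r, Complex.normSq (u₁ r) : ℝ) : ℂ) = 1 := by
      push_cast
      rw [← h11]
      exact Finset.sum_congr rfl fun r _ => (Complex.normSq_eq_conj_mul_self).symm ▸ rfl
    exact_mod_cast this
  have hsum2 : ∑ r, Complex.normSq (u₂ r) = 1 := by
    have : ((∑ r, Complex.normSq (u₂ r) : ℝ) : ℂ) = 1 := by
      push_cast
      rw [← h22]
      exact Finset.sum_congr rfl fun r _ => (Complex.normSq_eq_conj_mul_self).symm ▸ rfl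
    exact_mod_cast this
  have key : 2 * (K:ℝ)^2 ≤ ∑ k, ∑ k', ‖Matrix.trace ((Us k)ᴴ * Us k')‖ ^ 4 := by
    rw [← fp_main Us]
    calc 2 * (K:ℝ)^2
        = ∑ r, ((K:ℝ)^2 * Complex.normSq (u₁ r) + (K:ℝ)^2 * Complex.normSq (u₂ r)) := by
          rw [Finset.sum_add_distrib, ← Finset.mul_sum, ← Finset.mul_sum, hsum1, hsum2]
          ring
      _ ≤ ∑ r, ∑ x, Complex.normSq (fpA Us r x) := Finset.sum_le_sum fun r _ => hb r
  have hKpos : (0:ℝ) < (K:ℝ)^2 := by positivity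
  rw [framePotential]
  have hcard : ((Fintype.card (Fin K) : ℝ)) = (K:ℝ) := by simp
  rw [hcard]
  calc (2:ℝ) = ((K:ℝ)^2)⁻¹ * (2 * (K:ℝ)^2) := by field_simp
    _ ≤ ((K:ℝ)^2)⁻¹ * ∑ k, ∑ k', ‖Matrix.trace ((Us k)ᴴ * Us k')‖ ^ 4 := by
        exact mul_le_mul_of_nonneg_left key (by positivity)
end
end

section
/- Let F be a finite field of odd order d, and for a ∈ F let M_a = {λ(a,1) : λ ∈ F} ⊂ F², with stabilizer states B^{(a)}_b = (1/d)·Σ_λ χ(bλ)·w(λa, λ). Then tr(B^{(a)}_b · B^{(a')}_{b'}) = δ_{b,b'} if a = a' and = 1/d if a ≠ a'. Together with the computational basis this yields d+1 mutually unbiased bases of ℂ^d. -/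
open scoped Classical
open Matrix

noncomputable section

/-- The finite field `𝔽_{p^m}`. -/
abbrev GF (p m : ℕ) [Fact p.Prime] := GaloisField p m

noncomputable instance (p m : ℕ) [Fact p.Prime] : Fintype (GF p m) :=
  Fintype.ofFinite _

/-- The standard additive character `χ(a) = exp(2πi·Tr_{F/𝔽_p}(a)/p)`. -/
def stdChar (p m : ℕ) [Fact p.Prime] (a : GF p m) : ℂ :=
  Complex.exp (2 * Real.pi * Complex.I *
    ((Algebra.trace (ZMod p) (GF p m) a).val : ℂ) / p)

/-- The shift operator `x̂(q)|x⟩ = |x+q⟩`. -/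
def shiftOp (p m : ℕ) [Fact p.Prime] (q : GF p m) : Matrix (GF p m) (GF p m) ℂ :=
  Matrix.of fun x y => if x = y + q then 1 else 0

/-- The boost operator `ẑ(b)|x⟩ = χ(bx)|x⟩`. -/
def boostOp (p m : ℕ) [Fact p.Prime] (b : GF p m) : Matrix (GF p m) (GF p m) ℂ :=
  Matrix.diagonal fun x => stdChar p m (b * x)

/-- The Weyl operator `w(a,b) = χ(−2⁻¹ab)·ẑ(a)·x̂(b)`. -/
def weylOp (p m : ℕ) [Fact p.Prime] (a : GF p m × GF p m) :
    Matrix (GF p m) (GF p m) ℂ :=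
  stdChar p m (-((2 : GF p m)⁻¹ * a.1 * a.2)) • (boostOp p m a.1 * shiftOp p m a.2)

/-- The symplectic form `[a,b] = a₁b₂ − a₂b₁` on phase space `F × F`. -/
def sympForm (p m : ℕ) [Fact p.Prime] (a b : GF p m × GF p m) : GF p m :=
  a.1 * b.2 - a.2 * b.1

/-- The stabilizer-state projection `B^{(a)}_b = (1/d)·Σ_λ χ(bλ)·w(λa, λ)`. -/
def mubProj (p m : ℕ) [Fact p.Prime] (a b : GF p m) : Matrix (GF p m) (GF p m) ℂ :=
  (Fintype.card (GF p m) : ℂ)⁻¹ •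
    ∑ lam : GF p m, stdChar p m (b * lam) • weylOp p m (lam * a, lam)

namespace MubAux

variable (p m : ℕ) [Fact p.Prime]

lemma p_pos : 0 < p := (Fact.out : p.Prime).pos

lemma zeta_pow : Complex.exp (2 * Real.pi * Complex.I / p) ^ p = 1 :=
  (Complex.isPrimitiveRoot_exp p (p_pos p).ne').pow_eq_one

/-- `stdChar` as a bundled additive character. -/
def psi : AddChar (GF p m) ℂ :=
  (AddChar.zmodChar p (zeta_pow p)).compAddMonoidHom
    (Algebra.trace (ZMod p) (GF p m)).toAddMonoidHom

lemma stdChar_eq (a : GF p m) : stdChar p m a = psi p m a := by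
  have : NeZero p := ⟨(p_pos p).ne'⟩
  simp only [psi, AddChar.compAddMonoidHom_apply, LinearMap.toAddMonoidHom_coe,
    AddChar.zmodChar_apply, stdChar, ← Complex.exp_nat_mul]
  congr 1
  ring

lemma psi_ne_one : psi p m ≠ 1 := by
  have : NeZero p := ⟨(p_pos p).ne'⟩
  obtain ⟨a, ha⟩ := Algebra.trace_surjective (ZMod p) (GF p m) 1
  rw [AddChar.ne_one_iff]
  refine ⟨a, ?_⟩
  have h1 : (1 : ZMod p).val = 1 := by
    rw [ZMod.val_one_eq_one_mod]
    exact Nat.mod_eq_of_lt (Fact.out : p.Prime).one_lt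
  simp only [psi, AddChar.compAddMonoidHom_apply, LinearMap.toAddMonoidHom_coe, ha,
    AddChar.zmodChar_apply, h1, pow_one]
  exact (Complex.isPrimitiveRoot_exp p (p_pos p).ne').ne_one (Fact.out : p.Prime).one_lt

lemma sum_stdChar (c : GF p m) :
    ∑ x : GF p m, stdChar p m (x * c) =
      if c = 0 then (Fintype.card (GF p m) : ℂ) else 0 := by
  simp_rw [stdChar_eq]
  rw [AddChar.sum_mulShift c (AddChar.IsPrimitive.of_ne_one (psi_ne_one p m))]
  split <;> simp

lemma stdChar_add (x y : GF p m) :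
    stdChar p m (x + y) = stdChar p m x * stdChar p m y := by
  simp [stdChar_eq, AddChar.map_add_eq_mul]

lemma stdChar_zero : stdChar p m 0 = 1 := by
  simp [stdChar_eq]

lemma weylOp_apply (u : GF p m × GF p m) (x y : GF p m) :
    weylOp p m u x y =
      if x = y + u.2 then
        stdChar p m (-((2 : GF p m)⁻¹ * u.1 * u.2)) * stdChar p m (u.1 * x)
      else 0 := by
  simp only [weylOp, Matrix.smul_apply, boostOp, Matrix.diagonal_mul, shiftOp,
    Matrix.of_apply, smul_eq_mul]
  split <;> ring

lemma two_ne_zero' (hp : p ≠ 2) : (2 : GF p m) ≠ 0 := by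
  intro h
  have h2 : ((2 : ℕ) : GF p m) = 0 := by exact_mod_cast h
  rw [CharP.cast_eq_zero_iff (GF p m) p] at h2
  exact hp ((Nat.prime_dvd_prime_iff_eq (Fact.out : p.Prime) Nat.prime_two).mp h2)

lemma trace_weyl_mul (hp : p ≠ 2) (u v : GF p m × GF p m) :
    Matrix.trace (weylOp p m u * weylOp p m v) =
      if v = -u then (Fintype.card (GF p m) : ℂ) else 0 := by
  have h2 : (2 : GF p m) ≠ 0 := two_ne_zero' p m hp
  have hinv : (2 : GF p m)⁻¹ * 2 = 1 := inv_mul_cancel₀ h2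
  rw [Matrix.trace]
  simp only [Matrix.diag_apply, Matrix.mul_apply, weylOp_apply]
  have step1 : ∀ x : GF p m,
      (∑ y : GF p m,
        (if x = y + u.2 then
          stdChar p m (-((2 : GF p m)⁻¹ * u.1 * u.2)) * stdChar p m (u.1 * x) else 0) *
        (if y = x + v.2 then
          stdChar p m (-((2 : GF p m)⁻¹ * v.1 * v.2)) * stdChar p m (v.1 * y) else 0)) =
      if v.2 = -u.2 then
        stdChar p m (-((2 : GF p m)⁻¹ * u.1 * u.2)) * stdChar p m (u.1 * x) *
        (stdChar p m (-((2 : GF p m)⁻¹ * v.1 * v.2)) * stdChar p m (v.1 * (x - u.2)))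
      else 0 := by
    intro x
    rw [Finset.sum_eq_single (x - u.2)]
    · by_cases hc : v.2 = -u.2
      · rw [if_pos (by ring), if_pos (by rw [hc]; ring), if_pos hc]
      · rw [if_neg hc,
          if_neg (show ¬x - u.2 = x + v.2 from fun hy => hc (by linear_combination -hy)),
          mul_zero]
    · intro y _ hy
      rw [if_neg, zero_mul]
      intro hxy
      exact hy (by rw [hxy]; ring)
    · intro h
      exact absurd (Finset.mem_univ _) h
  rw [Finset.sum_congr rfl fun x _ => step1 x]
  by_cases hc : v.2 = -u.2
  · simp only [if_pos hc]
    have key : ∀ x : GF p m,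
        stdChar p m (-((2 : GF p m)⁻¹ * u.1 * u.2)) * stdChar p m (u.1 * x) *
        (stdChar p m (-((2 : GF p m)⁻¹ * v.1 * v.2)) * stdChar p m (v.1 * (x - u.2))) =
        stdChar p m
          (-((2 : GF p m)⁻¹ * u.1 * u.2) + -((2 : GF p m)⁻¹ * v.1 * v.2) + -(v.1 * u.2)) *
          stdChar p m (x * (u.1 + v.1)) := by
      intro x
      simp only [← stdChar_add]
      congr 1
      ring
    rw [Finset.sum_congr rfl fun x _ => key x, ← Finset.mul_sum, sum_stdChar]
    by_cases h1 : u.1 + v.1 = 0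
    · rw [if_pos h1, if_pos]
      · have harg : -((2 : GF p m)⁻¹ * u.1 * u.2) + -((2 : GF p m)⁻¹ * v.1 * v.2) +
            -(v.1 * u.2) = 0 := by
          have hv1 : v.1 = -u.1 := by linear_combination h1
          rw [hv1, hc]
          linear_combination (-(u.1 * u.2)) * hinv
        rw [harg, stdChar_zero, one_mul]
      · ext <;> simp only [Prod.fst_neg, Prod.snd_neg]
        · linear_combination h1
        · exact hc
    · rw [if_neg h1, mul_zero, if_neg]
      intro hv
      exact h1 (by rw [hv]; rw [Prod.fst_neg]; ring)
  · simp only [if_neg hc, Finset.sum_const_zero]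
    rw [if_neg]
    intro hv
    exact hc (by rw [hv]; rfl)

end MubAux

open MubAux

/-- the stabilizer states `B^{(a)}_b` satisfy
`tr(B^{(a)}_b B^{(a')}_{b'}) = δ_{b,b'}` for `a = a'` and `= 1/d` for `a ≠ a'`;
moreover they are unbiased with respect to the computational basis. Hence,
together with the computational basis, they form `d+1` mutually unbiased bases
of `ℂ^d`. -/
theorem mub_overlaps (p m : ℕ) [Fact p.Prime] (hp : p ≠ 2) (hm : 0 < m)
    (a a' b b' : GF p m) :
    (Matrix.trace (mubProj p m a b * mubProj p m a' b') =
        if a = a' then (if b = b' then 1 else 0)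
        else (Fintype.card (GF p m) : ℂ)⁻¹) ∧
    ∀ x : GF p m,
      Matrix.trace (mubProj p m a b * Matrix.single x x (1 : ℂ)) =
        (Fintype.card (GF p m) : ℂ)⁻¹ := by
  have hd0 : (Fintype.card (GF p m) : ℂ) ≠ 0 := by
    exact_mod_cast Nat.cast_ne_zero.mpr Fintype.card_ne_zero
  constructor
  · have expand : Matrix.trace (mubProj p m a b * mubProj p m a' b') =
        (Fintype.card (GF p m) : ℂ)⁻¹ * (Fintype.card (GF p m) : ℂ)⁻¹ *
        ∑ lam : GF p m, ∑ mu : GF p m,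
          stdChar p m (b * lam) * stdChar p m (b' * mu) *
            Matrix.trace (weylOp p m (lam * a, lam) * weylOp p m (mu * a', mu)) := by
      simp only [mubProj, Matrix.smul_mul, Matrix.mul_smul, smul_smul, Matrix.trace_smul,
        Finset.sum_mul, Finset.mul_sum, Matrix.trace_sum, smul_eq_mul]
      rw [Finset.sum_comm]
      apply Finset.sum_congr rfl; intro lam _
      apply Finset.sum_congr rfl; intro mu _
      ring
    rw [expand]
    simp only [trace_weyl_mul p m hp]
    have inner : ∀ lam : GF p m,
        (∑ mu : GF p m, stdChar p m (b * lam) * stdChar p m (b' * mu) *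
          (if ((mu * a', mu) : GF p m × GF p m) = -(lam * a, lam) then
            (Fintype.card (GF p m) : ℂ) else 0)) =
        stdChar p m (b * lam) * stdChar p m (b' * -lam) *
          (if lam * a' = lam * a then (Fintype.card (GF p m) : ℂ) else 0) := by
      intro lam
      rw [Finset.sum_eq_single (-lam)]
      · congr 1
        apply if_congr _ rfl rfl
        rw [Prod.ext_iff]
        simp only [Prod.fst_neg, Prod.snd_neg]
        constructor
        · intro ⟨h1, _⟩
          linear_combination -h1
        · intro h
          exact ⟨by linear_combination -h, trivial⟩
      · intro mu _ hmu
        rw [if_neg, mul_zero]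
        intro hpair
        exact hmu (congrArg Prod.snd hpair)
      · intro h
        exact absurd (Finset.mem_univ _) h
    rw [Finset.sum_congr rfl fun lam _ => inner lam]
    by_cases ha : a = a'
    · subst ha
      simp only [if_pos rfl, if_pos]
      have key : ∀ lam : GF p m,
          stdChar p m (b * lam) * stdChar p m (b' * -lam) * (Fintype.card (GF p m) : ℂ) =
          stdChar p m (lam * (b - b')) * (Fintype.card (GF p m) : ℂ) := by
        intro lam
        congr 1
        rw [← stdChar_add]
        congr 1
        ring
      rw [Finset.sum_congr rfl fun lam _ => key lam, ← Finset.sum_mul, sum_stdChar]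
      by_cases hb : b = b'
      · rw [if_pos hb, if_pos (show b - b' = 0 by rw [hb, sub_self])]
        field_simp
      · rw [if_neg hb, if_neg (sub_ne_zero.mpr hb), zero_mul, mul_zero]
    · rw [if_neg ha]
      have cond : ∀ lam : GF p m, (lam * a' = lam * a) ↔ lam = 0 := by
        intro lam
        constructor
        · intro h
          rcases mul_eq_zero.mp (show lam * (a' - a) = 0 by linear_combination h) with h' | h'
          · exact h'
          · exact absurd (by linear_combination -h') ha
        · intro h; rw [h]; ring
      have key : ∀ lam : GF p m,
          stdChar p m (b * lam) * stdChar p m (b' * -lam) *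
            (if lam * a' = lam * a then (Fintype.card (GF p m) : ℂ) else 0) =
          if lam = 0 then (Fintype.card (GF p m) : ℂ) else 0 := by
        intro lam
        by_cases h : lam = 0
        · rw [if_pos ((cond lam).mpr h), if_pos h, h]
          simp [stdChar_zero p m]
        · rw [if_neg (fun hh => h ((cond lam).mp hh)), if_neg h, mul_zero]
      rw [Finset.sum_congr rfl fun lam _ => key lam,
        Fintype.sum_ite_eq' 0 (fun _ => (Fintype.card (GF p m) : ℂ))]
      field_simp
  · intro x
    rw [Matrix.trace]
    rw [Finset.sum_eq_single x]
    · rw [Matrix.diag_apply, Matrix.mul_single_apply_same, mul_one]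
      rw [mubProj, Matrix.smul_apply, Matrix.sum_apply, smul_eq_mul]
      have : (∑ lam : GF p m, (stdChar p m (b * lam) • weylOp p m (lam * a, lam)) x x) =
          1 := by
        rw [Finset.sum_eq_single 0]
        · simp [weylOp_apply, stdChar_zero p m]
        · intro lam _ hlam
          rw [Matrix.smul_apply, weylOp_apply, if_neg, smul_zero]
          intro h
          exact hlam (by linear_combination -h)
        · intro h
          exact absurd (Finset.mem_univ _) h
      rw [this, mul_one]
    · intro z _ hz
      rw [Matrix.diag_apply]
      exact Matrix.mul_single_apply_of_ne (c := 1) x x z z hz _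
    · intro h
      exact absurd (Finset.mem_univ _) h
end
end
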